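/- Let X be a nonempty compact metric space on which the isometry group acts transitively. Then there is exactly one Borel probability measure on X invariant under every surjective isometry of X. -/

import Mathlib

open MeasureTheory Metric Set Function
namespace InvMeasAux
variable {X : Type*} [MetricSpace X]

def iota (f : X ≃ᵢ X) : C(X, X) := ⟨f, f.continuous⟩

lemma iota_injective : Function.Injective (iota (X := X)) := by
  intro f g h; ext x; exact ContinuousMap.congr_fun h x

@[simp] lemma iota_apply (f : X ≃ᵢ X) (x : X) : iota f x = f x := rfl

lemma isometry_iterate {f : X → X} (hf : Isometry f) : ∀ n, Isometry (f^[n])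
  | 0 => isometry_id
  | (n+1) => by rw [Function.iterate_succ]; exact (isometry_iterate hf n).comp hf

lemma surj_of_isometry [CompactSpace X] {f : X → X} (hf : Isometry f) :
    Function.Surjective f := by
  intro y
  by_contra hy
  push_neg at hy
  have hyr : y ∉ range f := by rintro ⟨x, rfl⟩; exact hy x rfl
  have hrc : IsClosed (range f) := (isCompact_range hf.continuous).isClosed
  have hpos : 0 < EMetric.infEdist y (range f) :=
    EMetric.infEdist_pos_iff_notMem_closure.2 (by rwa [hrc.closure_eq])
  obtain ⟨ε, εpos, hε⟩ : ∃ ε > 0, ∀ z ∈ range f, ε ≤ dist y z := by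
    rcases ENNReal.lt_iff_exists_real_btwn.1 hpos with ⟨r, -, hr0, hr⟩
    refine ⟨r, by exact_mod_cast (ENNReal.ofReal_pos.1 (by simpa using hr0)), fun z hz => ?_⟩
    by_contra h
    push_neg at h
    have : EMetric.infEdist y (range f) ≤ edist y z := EMetric.infEdist_le_edist_of_mem hz
    have h2 : edist y z < ENNReal.ofReal r := by
      rw [edist_dist]; exact ENNReal.ofReal_lt_ofReal_iff_of_nonneg dist_nonneg |>.2 h  -- maybe wrong name
    exact absurd (lt_of_le_of_lt this h2) (not_lt.2 hr.le)
  set u : ℕ → X := fun n => f^[n] y with hu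
  have key : ∀ m n, m < n → ε ≤ dist (u m) (u n) := by
    intro m n hmn
    have h1 : u n = f^[m] (f^[n - m] y) := by
      rw [hu, ← Function.iterate_add_apply]
      congr 1
      omega
    have h2 : dist (u m) (u n) = dist y (f^[n - m] y) := by
      rw [h1, hu]
      exact (isometry_iterate hf m).dist_eq _ _
    rw [h2]
    apply hε
    obtain ⟨k, hk⟩ : ∃ k, n - m = k + 1 := ⟨n - m - 1, by omega⟩
    rw [hk, Function.iterate_succ_apply']
    exact mem_range_self _
  obtain ⟨x, -, φ, hφ, hconv⟩ := isCompact_univ.tendsto_subseq (fun n => mem_univ (u n))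
  have hc : CauchySeq (u ∘ φ) := hconv.cauchySeq
  rw [Metric.cauchySeq_iff] at hc
  obtain ⟨N, hN⟩ := hc ε εpos
  have h1 := hN N le_rfl (N + 1) (by omega)
  exact absurd h1 (not_lt.2 (key _ _ (hφ (by omega))))

noncomputable instance [CompactSpace X] : MetricSpace (X ≃ᵢ X) :=
  MetricSpace.induced iota iota_injective inferInstance

variable [CompactSpace X]

lemma isometry_iota : Isometry (iota (X := X)) := Isometry.of_dist_eq fun _ _ => rfl

lemma dist_eval_le (f g : X ≃ᵢ X) (x : X) : dist (f x) (g x) ≤ dist f g :=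
  ContinuousMap.dist_apply_le_dist (f := iota f) (g := iota g) x

lemma dist_le' {f g : X ≃ᵢ X} {C : ℝ} (hC : 0 ≤ C) :
    dist f g ≤ C ↔ ∀ x, dist (f x) (g x) ≤ C :=
  ContinuousMap.dist_le (f := iota f) (g := iota g) hC

lemma range_iota : Set.range (iota (X := X)) = {f : C(X, X) | Isometry f} := by
  ext f
  constructor
  · rintro ⟨e, rfl⟩; exact e.isometry
  · intro hf
    have hb : Function.Bijective f := ⟨hf.injective, surj_of_isometry hf⟩
    exact ⟨⟨Equiv.ofBijective f hb, hf⟩, by ext x; rfl⟩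

lemma isCompact_isometries : IsCompact {f : C(X, X) | Isometry f} := by
  apply ArzelaAscoli.isCompact_of_equicontinuous
  · have himg : (ContinuousMap.toFun '' {f : C(X, X) | Isometry f})
        = {g : X → X | Isometry g} := by
      ext g
      constructor
      · rintro ⟨f, hf, rfl⟩; exact hf
      · intro hg; exact ⟨⟨g, hg.continuous⟩, hg, rfl⟩
    rw [himg]
    have hclosed : IsClosed {g : X → X | Isometry g} := by
      have : {g : X → X | Isometry g}
          = ⋂ (x : X) (y : X), {g : X → X | dist (g x) (g y) = dist x y} := by
        ext g; simp [isometry_iff_dist_eq, Set.mem_iInter]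
      rw [this]
      exact isClosed_iInter fun x => isClosed_iInter fun y =>
        isClosed_eq (((continuous_apply x).dist (continuous_apply y))) continuous_const
    exact hclosed.isCompact
  · intro x₀
    rw [Metric.equicontinuousAt_iff]
    intro ε hε
    exact ⟨ε, hε, fun x hx i => by
      rw [(show Isometry (i : C(X,X)) from i.2).dist_eq, dist_comm]; exact hx⟩

instance : CompactSpace (X ≃ᵢ X) := by
  rw [← isCompact_univ_iff]
  have h := isometry_iota (X := X).isEmbedding.isCompact_iff (s := Set.univ)
  rw [h, Set.image_univ, range_iota]
  exact isCompact_isometries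

end InvMeasAux

namespace More
open InvMeasAux
variable {X : Type*} [MetricSpace X] [CompactSpace X]

lemma dist_inv_le (f g : X ≃ᵢ X) : dist f⁻¹ g⁻¹ ≤ dist f g := by
  rw [dist_le' dist_nonneg]
  intro x
  have h1 : dist (f⁻¹ x) (g⁻¹ x) = dist (g (f⁻¹ x)) (g (g⁻¹ x)) := (g.isometry.dist_eq _ _).symm
  rw [h1]
  have h2 : g (g⁻¹ x) = x := g.apply_symm_apply x
  have h3 : f (f⁻¹ x) = x := f.apply_symm_apply x
  rw [h2]
  calc dist (g (f⁻¹ x)) x = dist (g (f⁻¹ x)) (f (f⁻¹ x)) := by rw [h3]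
    _ ≤ dist g f := dist_eval_le g f _
    _ = dist f g := dist_comm g f

lemma isometry_inv : Isometry (fun f : X ≃ᵢ X => f⁻¹) := by
  apply Isometry.of_dist_eq
  intro f g
  refine le_antisymm (dist_inv_le f g) ?_
  simpa using dist_inv_le f⁻¹ g⁻¹

lemma dist_mul_le (p q : (X ≃ᵢ X) × (X ≃ᵢ X)) :
    dist (p.1 * p.2) (q.1 * q.2) ≤ dist p.1 q.1 + dist p.2 q.2 := by
  rw [dist_le' (by positivity)]
  intro x
  calc dist ((p.1 * p.2) x) ((q.1 * q.2) x)
      = dist (p.1 (p.2 x)) (q.1 (q.2 x)) := rfl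
    _ ≤ dist (p.1 (p.2 x)) (q.1 (p.2 x)) + dist (q.1 (p.2 x)) (q.1 (q.2 x)) := dist_triangle _ _ _
    _ ≤ dist p.1 q.1 + dist (p.2 x) (q.2 x) := by
        gcongr
        · exact dist_eval_le _ _ _
        · rw [q.1.isometry.dist_eq]
    _ ≤ dist p.1 q.1 + dist p.2 q.2 := by gcongr; exact dist_eval_le _ _ _

instance : IsTopologicalGroup (X ≃ᵢ X) where
  continuous_mul := by
    have : LipschitzWith 2 (fun p : (X ≃ᵢ X) × (X ≃ᵢ X) => p.1 * p.2) := by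
      apply LipschitzWith.of_dist_le_mul
      intro p q
      calc dist (p.1 * p.2) (q.1 * q.2) ≤ dist p.1 q.1 + dist p.2 q.2 := dist_mul_le p q
        _ ≤ dist p q + dist p q := by
            gcongr
            · exact le_max_left _ _
            · exact le_max_right _ _
        _ = 2 * dist p q := by ring
    exact this.continuous
  continuous_inv := isometry_inv.continuous

noncomputable instance : MeasurableSpace (X ≃ᵢ X) := borel _
instance : BorelSpace (X ≃ᵢ X) := ⟨rfl⟩

variable [Nonempty X]

instance : Nonempty (X ≃ᵢ X) := ⟨1⟩

noncomputable def haarG : Measure (X ≃ᵢ X) :=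
  Measure.haarMeasure (⊤ : TopologicalSpace.PositiveCompacts (X ≃ᵢ X))

instance : (haarG (X := X)).IsMulLeftInvariant :=
  Measure.isMulLeftInvariant_haarMeasure _

instance : IsProbabilityMeasure (haarG (X := X)) := by
  constructor
  have := Measure.haarMeasure_self
    (K₀ := (⊤ : TopologicalSpace.PositiveCompacts (X ≃ᵢ X)))
  rwa [TopologicalSpace.PositiveCompacts.coe_top] at this

end More

namespace Construct
open InvMeasAux More
variable {X : Type*} [MetricSpace X] [CompactSpace X] [Nonempty X]
  [MeasurableSpace X] [BorelSpace X]

noncomputable def x₀ : X := Classical.arbitrary X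

lemma continuous_eval : Continuous (fun g : X ≃ᵢ X => g (x₀ : X)) := by
  have : LipschitzWith 1 (fun g : X ≃ᵢ X => g (x₀ : X)) := by
    apply LipschitzWith.of_dist_le_mul
    intro f g
    simpa using dist_eval_le f g (x₀ : X)
  exact this.continuous

noncomputable def invMeasure : Measure X :=
  (haarG (X := X)).map (fun g : X ≃ᵢ X => g (x₀ : X))

instance : IsProbabilityMeasure (invMeasure (X := X)) :=
  Measure.isProbabilityMeasure_map continuous_eval.measurable.aemeasurable

lemma invMeasure_invariant (Φ : X ≃ᵢ X) :
    (invMeasure (X := X)).map Φ = invMeasure (X := X) := by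
  rw [invMeasure, Measure.map_map Φ.continuous.measurable continuous_eval.measurable]
  have hcomp : (⇑Φ ∘ fun g : X ≃ᵢ X => g (x₀ : X))
      = (fun g : X ≃ᵢ X => g (x₀ : X)) ∘ (fun g => Φ * g) := rfl
  rw [hcomp, ← Measure.map_map continuous_eval.measurable
    (continuous_mul_left Φ).measurable]
  rw [map_mul_left_eq_self _ Φ]

end Construct

namespace Unique
open InvMeasAux
variable {X : Type*} [MetricSpace X] [CompactSpace X] [Nonempty X]
  [MeasurableSpace X] [BorelSpace X]

lemma ball_const (htrans : ∀ x y : X, ∃ Φ : X ≃ᵢ X, Φ x = y)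
    {μ : Measure X} (hμ : ∀ Φ : X ≃ᵢ X, μ.map Φ = μ) (x y : X) (r : ℝ) :
    μ (ball x r) = μ (ball y r) := by
  obtain ⟨Φ, hΦ⟩ := htrans x y
  have h1 : μ (ball y r) = (μ.map Φ) (ball y r) := by rw [hμ]
  rw [h1, Measure.map_apply Φ.continuous.measurable measurableSet_ball]
  congr 1
  ext z
  simp only [Set.mem_preimage, mem_ball, ← hΦ]
  rw [Φ.dist_eq]

lemma fubini_key {μ ν : Measure X} [IsProbabilityMeasure μ] [IsProbabilityMeasure ν]
    {x₀ : X} {r : ℝ} (hνball : ∀ x, ν (ball x r) = ν (ball x₀ r))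
    {U : Set X} (hU : MeasurableSet U) :
    ∫⁻ y, μ (U ∩ ball y r) ∂ν = ν (ball x₀ r) * μ U := by
  haveI : SecondCountableTopology X := by infer_instance
  set s : Set (X × X) := {p | p.1 ∈ U ∧ dist p.1 p.2 < r} with hs_def
  have hs : MeasurableSet s := by
    have : s = (Prod.fst ⁻¹' U) ∩ {p : X × X | dist p.1 p.2 < r} := rfl
    rw [this]
    exact (hU.preimage measurable_fst).inter
      (isOpen_lt continuous_dist continuous_const).measurableSet
  have h1 : (μ.prod ν) s = ∫⁻ x, ν (Prod.mk x ⁻¹' s) ∂μ := Measure.prod_apply hs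
  have h2 : ∀ x, ν (Prod.mk x ⁻¹' s) = U.indicator (fun _ => ν (ball x₀ r)) x := by
    intro x
    by_cases hx : x ∈ U
    · have hpre : Prod.mk x ⁻¹' s = ball x r := by
        ext y
        simp only [Set.mem_preimage, hs_def, Set.mem_setOf_eq, mem_ball, hx, true_and]
        rw [dist_comm]
      rw [hpre, hνball x, Set.indicator_of_mem hx]
    · have hpre : Prod.mk x ⁻¹' s = ∅ := by
        ext y
        simp [hs_def, hx]
      rw [hpre, Set.indicator_of_notMem hx, measure_empty]
  have h3 : (μ.prod ν) s = ν (ball x₀ r) * μ U := by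
    rw [h1]
    simp_rw [h2]
    rw [lintegral_indicator_const hU]
  have h4 : (μ.prod ν) s = ∫⁻ y, μ ((fun x => (x, y)) ⁻¹' s) ∂ν :=
    Measure.prod_apply_symm hs
  have h5 : ∀ y, ((fun x => (x, y)) ⁻¹' s) = U ∩ ball y r := by
    intro y
    ext x
    simp [hs_def, mem_ball, Set.mem_inter_iff]
  rw [← h3, h4]
  simp_rw [h5]

end Unique

namespace Unique
variable {X : Type*} [MetricSpace X] [CompactSpace X] [Nonempty X]
  [MeasurableSpace X] [BorelSpace X]

lemma ball_pos {μ : Measure X} [IsProbabilityMeasure μ] {x₀ : X} {r : ℝ}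
    (hball : ∀ x y : X, μ (ball x r) = μ (ball y r)) (hr : 0 < r) :
    0 < μ (ball x₀ r) := by
  rcases eq_or_ne (μ (ball x₀ r)) 0 with h | h
  · exfalso
    obtain ⟨t, ht⟩ := isCompact_univ.elim_finite_subcover (fun x : X => ball x r)
      (fun _ => isOpen_ball) (fun x _ => Set.mem_iUnion.2 ⟨x, mem_ball_self hr⟩)
    have h1 : (1 : ENNReal) = μ Set.univ := (measure_univ).symm
    have h2 : μ Set.univ ≤ ∑ x ∈ t, μ (ball x r) :=
      le_trans (measure_mono ht) (measure_biUnion_finset_le t _)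
    have h3 : ∀ x ∈ t, μ (ball x r) = 0 := fun x _ => (hball x x₀).trans h
    rw [Finset.sum_eq_zero h3, measure_univ] at h2
    exact one_ne_zero (le_antisymm h2 zero_le)
  · exact pos_iff_ne_zero.2 h

end Unique

namespace Unique
variable {X : Type*} [MetricSpace X] [CompactSpace X] [Nonempty X]
  [MeasurableSpace X] [BorelSpace X]

lemma le_open (htrans : ∀ x y : X, ∃ Φ : X ≃ᵢ X, Φ x = y)
    {μ ν : Measure X} [IsProbabilityMeasure μ] [IsProbabilityMeasure ν]
    (hμ : ∀ Φ : X ≃ᵢ X, μ.map Φ = μ) (hν : ∀ Φ : X ≃ᵢ X, ν.map Φ = ν)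
    {U : Set X} (hU : IsOpen U) : ν U ≤ μ U := by
  set x₀ : X := Classical.arbitrary X
  have hμball : ∀ r : ℝ, ∀ x y : X, μ (ball x r) = μ (ball y r) :=
    fun r x y => ball_const htrans hμ x y r
  have hνball : ∀ r : ℝ, ∀ x y : X, ν (ball x r) = ν (ball y r) :=
    fun r x y => ball_const htrans hν x y r
  -- the two ball functions agree
  have agree : ∀ r : ℝ, μ (ball x₀ r) = ν (ball x₀ r) := by
    intro r
    have h1 := fubini_key (μ := μ) (ν := ν) (x₀ := x₀) (r := r)
      (fun x => hνball r x x₀) MeasurableSet.univ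
    simp only [Set.univ_inter, measure_univ, mul_one] at h1
    have h2 : ∫⁻ y, μ (ball y r) ∂ν = μ (ball x₀ r) := by
      have : ∀ y : X, μ (ball y r) = μ (ball x₀ r) := fun y => hμball r y x₀
      simp_rw [this]
      simp [lintegral_const]
    rw [← h1, h2]
  set V : ℕ → Set X := fun n => (Metric.thickening (1 / (n + 1) : ℝ) Uᶜ)ᶜ with hV
  have hVmeas : ∀ n, MeasurableSet (V n) :=
    fun n => Metric.isOpen_thickening.isClosed_compl.measurableSet
  have hVmono : Monotone V := by
    intro m n hmn
    apply Set.compl_subset_compl.2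
    apply Metric.thickening_mono
    apply one_div_le_one_div_of_le (by positivity)
    exact_mod_cast by omega
  have hUsub : U ⊆ ⋃ n, V n := by
    intro y hy
    obtain ⟨ε, εpos, hε⟩ := Metric.isOpen_iff.1 hU y hy
    obtain ⟨n, hn⟩ := exists_nat_one_div_lt εpos
    refine Set.mem_iUnion.2 ⟨n, fun hmem => ?_⟩
    rw [Metric.mem_thickening_iff] at hmem
    obtain ⟨z, hz, hd⟩ := hmem
    exact hz (hε (mem_ball.2 (by rw [dist_comm]; exact hd.trans hn)))
  have hVle : ∀ n, ν (V n) ≤ μ U := by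
    intro n
    set r : ℝ := (1 / (n + 1) : ℝ) with hr_def
    have hr : 0 < r := by positivity
    have key : ∫⁻ y, μ (U ∩ ball y r) ∂ν = μ (ball x₀ r) * μ U := by
      rw [fubini_key (fun x => hνball r x x₀) hU.measurableSet, agree r]
    have lower : μ (ball x₀ r) * ν (V n) ≤ ∫⁻ y, μ (U ∩ ball y r) ∂ν := by
      rw [← lintegral_indicator_const (hVmeas n)]
      apply lintegral_mono
      intro y
      by_cases hy : y ∈ V n
      · rw [Set.indicator_of_mem hy]
        have hsub : ball y r ⊆ U := by
          intro z hz
          by_contra hzU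
          exact hy (Metric.mem_thickening_iff.2 ⟨z, hzU, by rw [dist_comm]; exact mem_ball.1 hz⟩)
        show μ (ball x₀ r) ≤ μ (U ∩ ball y r)
        rw [Set.inter_eq_right.2 hsub, hμball r y x₀]
      · simp [Set.indicator_of_notMem hy]
    have hc0 : μ (ball x₀ r) ≠ 0 := (ball_pos (hμball r) hr).ne'
    have hcT : μ (ball x₀ r) ≠ ⊤ := (measure_lt_top μ _).ne
    have : μ (ball x₀ r) * ν (V n) ≤ μ (ball x₀ r) * μ U := lower.trans (le_of_eq key)
    exact (ENNReal.mul_le_mul_iff_right hc0 hcT).1 this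
  calc ν U ≤ ν (⋃ n, V n) := measure_mono hUsub
    _ = ⨆ n, ν (V n) := hVmono.directed_le.measure_iUnion
    _ ≤ μ U := iSup_le hVle

lemma measure_eq (htrans : ∀ x y : X, ∃ Φ : X ≃ᵢ X, Φ x = y)
    {μ ν : Measure X} [IsProbabilityMeasure μ] [IsProbabilityMeasure ν]
    (hμ : ∀ Φ : X ≃ᵢ X, μ.map Φ = μ) (hν : ∀ Φ : X ≃ᵢ X, ν.map Φ = ν) : μ = ν := by
  apply MeasureTheory.ext_of_generate_finite {s : Set X | IsOpen s}
    (BorelSpace.measurable_eq (α := X)) isPiSystem_isOpen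
  · intro s hs
    exact le_antisymm (le_open htrans hν hμ hs) (le_open htrans hμ hν hs)
  · simp

end Unique

open MeasureTheory

/-- Let X be a nonempty compact metric space on which the isometry group
acts transitively. Then there is exactly one Borel probability measure on X invariant
under every surjective isometry of X. -/
theorem unique_invariant_measure_of_transitive {X : Type*} [MetricSpace X]
    [CompactSpace X] [Nonempty X] [MeasurableSpace X] [BorelSpace X]
    (htrans : ∀ x y : X, ∃ Φ : X ≃ᵢ X, Φ x = y) :
    ∃! μ : ProbabilityMeasure X,
      ∀ Φ : X ≃ᵢ X, (μ : Measure X).map Φ = (μ : Measure X) := by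
  refine ⟨⟨Construct.invMeasure (X := X), inferInstance⟩, ?_, ?_⟩
  · intro Φ
    exact Construct.invMeasure_invariant Φ
  · intro ν hν
    apply ProbabilityMeasure.toMeasure_injective
    exact Unique.measure_eq (ν := Construct.invMeasure (X := X)) htrans hν
      (fun Φ => Construct.invMeasure_invariant Φ)
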